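/- Broadcast versus reach: For any information graph G = (V, E, α) and any vertex v ∈ V, the broadcast satisfies β(G) ≥ (reach_G(v))², i.e., for all distinct vertices u, w, prox_G(u, w) ≥ reach_G(v)². Consequently, for any instance (G, k), the optimum single-source reach Υ* (for any source vertex) and the optimum broadcast β* achievable by adding at most k edges satisfy Υ* ≤ √(β*). -/
import Mathlib


open scoped Classical FinsetFamily

variable {V : Type*} [Fintype V] [DecidableEq V]

/-- The proximity of `u` and `v` in the information graph `(V, E, α)`: the probability
that `u` and `v` are connected in a graph obtained by retaining each edge of `E`
independently with probability `α`. -/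
noncomputable def prox (E : Finset (Sym2 V)) (α : ℝ) (u v : V) : ℝ :=
  ∑ F ∈ E.powerset,
    if (SimpleGraph.fromEdgeSet (F : Set (Sym2 V))).Reachable u v then
      α ^ F.card * (1 - α) ^ (E \ F).card
    else 0

/-- The broadcast of an information graph: the minimum proximity over pairs of distinct
vertices. -/
noncomputable def broadcast (E : Finset (Sym2 V)) (α : ℝ) : ℝ :=
  ⨅ p : {p : V × V // p.1 ≠ p.2}, prox E α p.1.1 p.1.2

/-- The optimum broadcast achievable by adding at most `k` vertex pairs disjoint from `E`. -/
noncomputable def optBroadcast (E : Finset (Sym2 V)) (α : ℝ) (k : ℕ) : ℝ :=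
  ⨆ F : {F : Finset (Sym2 V) // F.card ≤ k ∧ ∀ e ∈ F, e ∉ E}, broadcast (E ∪ F.1) α

/-- The reach of a vertex `v`: the minimum proximity of `v` to any other vertex. -/
noncomputable def reach (E : Finset (Sym2 V)) (α : ℝ) (v : V) : ℝ :=
  ⨅ u : {u : V // u ≠ v}, prox E α v u.1

/-- The optimum reach of a source vertex `vs` achievable by adding at most `k`
vertex pairs disjoint from `E`. -/
noncomputable def optReach (E : Finset (Sym2 V)) (α : ℝ) (k : ℕ) (vs : V) : ℝ :=
  ⨆ F : {F : Finset (Sym2 V) // F.card ≤ k ∧ ∀ e ∈ F, e ∉ E}, reach (E ∪ F.1) α vs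

/-- The probability that, in a sampled graph, all edges of at least one member of the
family `P` of edge-lists are retained. -/
noncomputable def prPaths (E : Finset (Sym2 V)) (α : ℝ) (P : Set (List (Sym2 V))) : ℝ :=
  ∑ F ∈ E.powerset,
    if ∃ p ∈ P, ∀ e ∈ p, e ∈ F then α ^ F.card * (1 - α) ^ (E \ F).card
    else 0

private lemma sum_mu (E : Finset (Sym2 V)) (α : ℝ) :
    ∑ F ∈ E.powerset, α ^ F.card * (1 - α) ^ (E \ F).card = 1 := by
  have h := Finset.prod_add (fun _ : Sym2 V => α) (fun _ : Sym2 V => 1 - α) E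
  have h2 : ∏ _i ∈ E, (α + (1 - α)) = 1 := by simp
  rw [show (∑ F ∈ E.powerset, α ^ F.card * (1 - α) ^ (E \ F).card)
      = ∑ t ∈ E.powerset, (∏ _i ∈ t, α) * ∏ _i ∈ E \ t, (1 - α) from
    Finset.sum_congr rfl fun F _ => by rw [Finset.prod_const, Finset.prod_const], ← h, h2]

private lemma prox_nonneg (E : Finset (Sym2 V)) (α : ℝ) (hα0 : 0 ≤ α) (hα1 : α ≤ 1)
    (u w : V) : 0 ≤ prox E α u w := by
  refine Finset.sum_nonneg fun F _ => ?_
  split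
  · exact mul_nonneg (pow_nonneg hα0 _) (pow_nonneg (by linarith) _)
  · exact le_rfl

private lemma prox_le_one (E : Finset (Sym2 V)) (α : ℝ) (hα0 : 0 ≤ α) (hα1 : α ≤ 1)
    (u w : V) : prox E α u w ≤ 1 := by
  rw [← sum_mu E α]
  refine Finset.sum_le_sum fun F _ => ?_
  split
  · exact le_rfl
  · exact mul_nonneg (pow_nonneg hα0 _) (pow_nonneg (by linarith) _)

private lemma prox_mul (E : Finset (Sym2 V)) (α : ℝ) (hα0 : 0 ≤ α) (hα1 : α ≤ 1)
    (v u w : V) : prox E α v u * prox E α v w ≤ prox E α u w := by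
  have hβ : (0:ℝ) ≤ 1 - α := by linarith
  set μ : Finset (Sym2 V) → ℝ :=
    fun F => if F ⊆ E then α ^ F.card * (1 - α) ^ (E \ F).card else 0 with hμdef
  have hμ0 : ∀ F, 0 ≤ μ F := fun F => by
    simp only [hμdef]; split
    · exact mul_nonneg (pow_nonneg hα0 _) (pow_nonneg hβ _)
    · exact le_rfl
  set f : Finset (Sym2 V) → ℝ :=
    fun F => if (SimpleGraph.fromEdgeSet (F : Set (Sym2 V))).Reachable v u then 1 else 0 with hfdef
  set g : Finset (Sym2 V) → ℝ :=
    fun F => if (SimpleGraph.fromEdgeSet (F : Set (Sym2 V))).Reachable v w then 1 else 0 with hgdef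
  have hf0 : ∀ F, 0 ≤ f F := fun F => by simp only [hfdef]; split <;> norm_num
  have hg0 : ∀ F, 0 ≤ g F := fun F => by simp only [hgdef]; split <;> norm_num
  have hfmono : ∀ a b : Finset (Sym2 V), a ⊆ b → f a ≤ f b := by
    intro a b hab
    simp only [hfdef]
    split
    · rw [if_pos]
      exact SimpleGraph.Reachable.mono
        (SimpleGraph.fromEdgeSet_mono (by exact_mod_cast hab)) (by assumption)
    · split <;> norm_num
  have hgmono : ∀ a b : Finset (Sym2 V), a ⊆ b → g a ≤ g b := by
    intro a b hab
    simp only [hgdef]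
    split
    · rw [if_pos]
      exact SimpleGraph.Reachable.mono
        (SimpleGraph.fromEdgeSet_mono (by exact_mod_cast hab)) (by assumption)
    · split <;> norm_num
  -- log-supermodularity (in fact modularity) of μ
  have hμmod : ∀ a b : Finset (Sym2 V), μ a * μ b = μ (a ⊓ b) * μ (a ⊔ b) := by
    intro a b
    by_cases ha : a ⊆ E
    · by_cases hb : b ⊆ E
      · have hib : a ⊓ b ⊆ E := Finset.Subset.trans Finset.inter_subset_left ha
        have hsb : a ⊔ b ⊆ E := Finset.union_subset ha hb
        simp only [hμdef, if_pos ha, if_pos hb, if_pos hib, if_pos hsb]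
        have hc1 : (a ⊓ b).card + (a ⊔ b).card = a.card + b.card :=
          Finset.card_inter_add_card_union a b
        have hc2 : (E \ (a ⊔ b)).card + (E \ (a ⊓ b)).card = (E \ a).card + (E \ b).card := by
          rw [sdiff_sup, sdiff_inf]
          exact Finset.card_inter_add_card_union (E \ a) (E \ b)
        calc α ^ a.card * (1 - α) ^ (E \ a).card * (α ^ b.card * (1 - α) ^ (E \ b).card)
            = α ^ (a.card + b.card) * (1 - α) ^ ((E \ a).card + (E \ b).card) := by
              rw [pow_add, pow_add]; ring
          _ = α ^ ((a ⊓ b).card + (a ⊔ b).card)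
              * (1 - α) ^ ((E \ (a ⊔ b)).card + (E \ (a ⊓ b)).card) := by rw [hc1, hc2]
          _ = _ := by rw [pow_add, pow_add]; ring
      · have h' : ¬ a ∪ b ⊆ E := fun h => hb (Finset.Subset.trans Finset.subset_union_right h)
        simp [hμdef, hb, h', Finset.sup_eq_union]
    · have h' : ¬ a ∪ b ⊆ E := fun h => ha (Finset.Subset.trans Finset.subset_union_left h)
      simp [hμdef, ha, h', Finset.sup_eq_union]
  have key := four_functions_theorem (fun F => μ F * f F) (fun F => μ F * g F) μ
      (fun F => μ F * (f F * g F))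
      (fun F => mul_nonneg (hμ0 F) (hf0 F)) (fun F => mul_nonneg (hμ0 F) (hg0 F)) hμ0
      (fun F => mul_nonneg (hμ0 F) (mul_nonneg (hf0 F) (hg0 F)))
      (fun a b => by
        have : μ a * f a * (μ b * g b) = μ a * μ b * (f a * g b) := by ring
        rw [this, hμmod a b]
        have h1 : f a * g b ≤ f (a ⊔ b) * g (a ⊔ b) :=
          mul_le_mul (hfmono a (a ⊔ b) le_sup_left) (hgmono b (a ⊔ b) le_sup_right)
            (hg0 b) (hf0 _)
        calc μ (a ⊓ b) * μ (a ⊔ b) * (f a * g b)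
            ≤ μ (a ⊓ b) * μ (a ⊔ b) * (f (a ⊔ b) * g (a ⊔ b)) := by
              exact mul_le_mul_of_nonneg_left h1 (mul_nonneg (hμ0 _) (hμ0 _))
          _ = μ (a ⊓ b) * (μ (a ⊔ b) * (f (a ⊔ b) * g (a ⊔ b))) := by ring)
      E.powerset E.powerset
  have hinfs : E.powerset ⊼ E.powerset = E.powerset := by
    ext c
    simp only [Finset.mem_infs, Finset.mem_powerset]
    constructor
    · rintro ⟨a, ha, b, hb, rfl⟩
      exact Finset.Subset.trans Finset.inter_subset_left ha
    · intro hc; exact ⟨c, hc, c, hc, inf_idem c⟩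
  have hsups : E.powerset ⊻ E.powerset = E.powerset := by
    ext c
    simp only [Finset.mem_sups, Finset.mem_powerset]
    constructor
    · rintro ⟨a, ha, b, hb, rfl⟩
      exact Finset.union_subset ha hb
    · intro hc; exact ⟨c, hc, c, hc, sup_idem c⟩
  rw [hinfs, hsups] at key
  have e1 : ∑ F ∈ E.powerset, μ F * f F = prox E α v u := by
    refine Finset.sum_congr rfl fun F hF => ?_
    rw [Finset.mem_powerset] at hF
    simp only [hμdef, hfdef, if_pos hF, mul_ite, mul_one, mul_zero]
  have e2 : ∑ F ∈ E.powerset, μ F * g F = prox E α v w := by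
    refine Finset.sum_congr rfl fun F hF => ?_
    rw [Finset.mem_powerset] at hF
    simp only [hμdef, hgdef, if_pos hF, mul_ite, mul_one, mul_zero]
  have e3 : ∑ F ∈ E.powerset, μ F = 1 := by
    rw [← sum_mu E α]
    refine Finset.sum_congr rfl fun F hF => ?_
    rw [Finset.mem_powerset] at hF
    simp only [hμdef, if_pos hF]
  have e4 : ∑ F ∈ E.powerset, μ F * (f F * g F) ≤ prox E α u w := by
    refine Finset.sum_le_sum fun F hF => ?_
    rw [Finset.mem_powerset] at hF
    simp only [hμdef, hfdef, hgdef, if_pos hF]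
    by_cases h1 : (SimpleGraph.fromEdgeSet (F : Set (Sym2 V))).Reachable v u
    · by_cases h2 : (SimpleGraph.fromEdgeSet (F : Set (Sym2 V))).Reachable v w
      · rw [if_pos h1, if_pos h2, if_pos (h1.symm.trans h2)]
        norm_num
      · rw [if_neg h2]
        simp only [mul_zero]
        split
        · exact mul_nonneg (pow_nonneg hα0 _) (pow_nonneg hβ _)
        · exact le_rfl
    · rw [if_neg h1]
      simp only [zero_mul, mul_zero]
      split
      · exact mul_nonneg (pow_nonneg hα0 _) (pow_nonneg hβ _)
      · exact le_rfl
  rw [e1, e2, e3, one_mul] at key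
  exact key.trans e4

private lemma prox_comm (E : Finset (Sym2 V)) (α : ℝ) (u w : V) :
    prox E α u w = prox E α w u :=
  Finset.sum_congr rfl fun F _ => if_congr (SimpleGraph.reachable_comm) rfl rfl

private lemma reach_nonneg (E : Finset (Sym2 V)) (α : ℝ) (hα0 : 0 ≤ α) (hα1 : α ≤ 1)
    (v : V) : 0 ≤ reach E α v :=
  Real.iInf_nonneg fun u => prox_nonneg E α hα0 hα1 v u.1

private lemma reach_le (E : Finset (Sym2 V)) (α : ℝ) (hα0 : 0 ≤ α) (hα1 : α ≤ 1)
    (v : V) {u : V} (hu : u ≠ v) : reach E α v ≤ prox E α v u := by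
  refine ciInf_le ⟨0, ?_⟩ (⟨u, hu⟩ : {u : V // u ≠ v})
  rintro x ⟨i, rfl⟩
  exact prox_nonneg E α hα0 hα1 v i.1

private lemma reach_sq_le (E : Finset (Sym2 V)) (α : ℝ) (hα0 : 0 ≤ α) (hα1 : α ≤ 1)
    (v : V) : ∀ u w : V, u ≠ w → (reach E α v) ^ 2 ≤ prox E α u w := by
  intro u w huw
  have hr0 := reach_nonneg E α hα0 hα1 v
  rw [sq]
  rcases eq_or_ne u v with rfl | hu
  · have h1 : reach E α u ≤ prox E α u w := reach_le E α hα0 hα1 u (Ne.symm huw)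
    have h2 : prox E α u w ≤ 1 := prox_le_one E α hα0 hα1 u w
    nlinarith
  · rcases eq_or_ne w v with rfl | hw
    · have h1 : reach E α w ≤ prox E α w u := reach_le E α hα0 hα1 w hu
      have h2 : prox E α w u ≤ 1 := prox_le_one E α hα0 hα1 w u
      rw [prox_comm]
      nlinarith
    · have h1 : reach E α v ≤ prox E α v u := reach_le E α hα0 hα1 v hu
      have h2 : reach E α v ≤ prox E α v w := reach_le E α hα0 hα1 v hw
      have h3 := prox_mul E α hα0 hα1 v u w
      have h4 := prox_nonneg E α hα0 hα1 v u
      have h5 := mul_le_mul h1 h2 hr0 h4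
      linarith

/-- broadcast versus reach: `β(G) ≥ reach_G(v)²` pairwise, and the
optimum reach is at most the square root of the optimum broadcast. -/
theorem broadcast_vs_reach
    (E : Finset (Sym2 V)) (α : ℝ) (hα0 : 0 ≤ α) (hα1 : α ≤ 1)
    (v : V) (k : ℕ) :
    (∀ u w : V, u ≠ w → (reach E α v) ^ 2 ≤ prox E α u w) ∧
    optReach E α k v ≤ Real.sqrt (optBroadcast E α k) := by
  refine ⟨reach_sq_le E α hα0 hα1 v, ?_⟩
  haveI hBne : Nonempty {F : Finset (Sym2 V) // F.card ≤ k ∧ ∀ e ∈ F, e ∉ E} :=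
    ⟨⟨∅, by simp⟩⟩
  unfold optReach optBroadcast
  refine ciSup_le fun F => ?_
  have hb_le_one : ∀ F' : {F : Finset (Sym2 V) // F.card ≤ k ∧ ∀ e ∈ F, e ∉ E},
      broadcast (E ∪ F'.1) α ≤ 1 := by
    intro F'
    unfold broadcast
    by_cases hne : Nonempty {p : V × V // p.1 ≠ p.2}
    · obtain ⟨p⟩ := hne
      refine le_trans (ciInf_le ⟨0, ?_⟩ p) (prox_le_one _ _ hα0 hα1 _ _)
      rintro x ⟨i, rfl⟩
      exact prox_nonneg _ _ hα0 hα1 _ _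
    · haveI : IsEmpty {p : V × V // p.1 ≠ p.2} := not_nonempty_iff.mp hne
      rw [Real.iInf_of_isEmpty]
      norm_num
  have hbdd : BddAbove (Set.range fun F : {F : Finset (Sym2 V) // F.card ≤ k ∧
      ∀ e ∈ F, e ∉ E} => broadcast (E ∪ F.1) α) := by
    refine ⟨1, ?_⟩
    rintro x ⟨i, rfl⟩
    exact hb_le_one i
  have h2 : broadcast (E ∪ F.1) α ≤
      ⨆ F : {F : Finset (Sym2 V) // F.card ≤ k ∧ ∀ e ∈ F, e ∉ E}, broadcast (E ∪ F.1) α :=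
    le_ciSup hbdd F
  have hsq : reach (E ∪ F.1) α v ^ 2 ≤ broadcast (E ∪ F.1) α := by
    by_cases hne : Nonempty {p : V × V // p.1 ≠ p.2}
    · haveI := hne
      exact le_ciInf fun p => reach_sq_le (E ∪ F.1) α hα0 hα1 v p.1.1 p.1.2 p.2
    · haveI h' : IsEmpty {p : V × V // p.1 ≠ p.2} := not_nonempty_iff.mp hne
      haveI : IsEmpty {u : V // u ≠ v} := ⟨fun u => h'.false ⟨(u.1, v), u.2⟩⟩
      unfold broadcast reach
      rw [Real.iInf_of_isEmpty, Real.iInf_of_isEmpty]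
      norm_num
  have h0 : 0 ≤ reach (E ∪ F.1) α v := reach_nonneg (E ∪ F.1) α hα0 hα1 v
  have hb0 : 0 ≤ broadcast (E ∪ F.1) α := le_trans (sq_nonneg _) hsq
  have hstep : reach (E ∪ F.1) α v ≤ Real.sqrt (broadcast (E ∪ F.1) α) :=
    (Real.le_sqrt h0 hb0).mpr hsq
  exact hstep.trans (Real.sqrt_le_sqrt h2)
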